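/- Let S, X₁, X₂, Z₂, Z₃ be jointly Gaussian zero-mean with the covariance structure Var(X₁)=P̃₁, Var(X₂)=P̃₂, Var(S)=Q, Cov(X₁,X₂)=ρ₁₂√(P̃₁P̃₂), Cov(X₂,S)=ρ₂ₛ√(P̃₂Q), Cov(X₁,S)=0, and Z₂~N(0,N₂), Z₃~N(0,N₃) independent of everything. Set Y₂=X₁+Z₂ and Y₃'=X₁+Z₃. Then I(X₁; Y₂, Y₃' | S, X₂) = ½·log₂(1 + P̃₁(1 − ρ₁₂²/(1−ρ₂ₛ²))·(1/N₂ + 1/N₃)). -/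

import Mathlib

open RealInnerProductSpace

set_option maxHeartbeats 1000000

/-- Gram matrix of a finite family of vectors (covariance matrix of zero-mean
jointly Gaussian random variables modeled as elements of an inner product space). -/
noncomputable def gramM {V : Type*} [NormedAddCommGroup V] [InnerProductSpace ℝ V] {n : ℕ}
    (v : Fin n → V) : Matrix (Fin n) (Fin n) ℝ := Matrix.of fun i j => ⟪v i, v j⟫

/-- (Conditional) mutual information `I(x ; y | z)` of jointly Gaussian zero-mean random
variables, expressed by the standard Gaussian determinant formula (base-2 logarithm). -/
noncomputable def gMI {V : Type*} [NormedAddCommGroup V] [InnerProductSpace ℝ V] {a b c : ℕ}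
    (x : Fin a → V) (y : Fin b → V) (z : Fin c → V) : ℝ :=
  (1/2) * Real.logb 2 (((gramM (Fin.append x z)).det * (gramM (Fin.append y z)).det) /
    ((gramM (Fin.append x (Fin.append y z))).det * (gramM z).det))

/-- `I(X₁; Y₂, Y₃' | S, X₂) = ½ log₂(1 + P̃₁(1 - ρ₁₂²/(1-ρ₂ₛ²))(1/N₂ + 1/N₃))`
where `Y₂ = X₁ + Z₂` and `Y₃' = X₁ + Z₃`. -/
theorem stmt9 {V : Type*} [NormedAddCommGroup V] [InnerProductSpace ℝ V]
    (P1t P2t Q N2 N3 ρ12 ρ2s : ℝ)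
    (hP1 : 0 < P1t) (hP2 : 0 < P2t) (hQ : 0 < Q) (hN2 : 0 < N2) (hN3 : 0 < N3)
    (hρ2s : ρ2s ^ 2 < 1)
    (s x1 x2 z2 z3 : V)
    (hx1 : ⟪x1, x1⟫ = P1t) (hx2 : ⟪x2, x2⟫ = P2t) (hs : ⟪s, s⟫ = Q)
    (hx1x2 : ⟪x1, x2⟫ = ρ12 * Real.sqrt (P1t * P2t))
    (hx2s : ⟪x2, s⟫ = ρ2s * Real.sqrt (P2t * Q)) (hx1s : ⟪x1, s⟫ = 0)
    (hz2 : ⟪z2, z2⟫ = N2) (hz3 : ⟪z3, z3⟫ = N3)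
    (hz2x1 : ⟪z2, x1⟫ = 0) (hz2x2 : ⟪z2, x2⟫ = 0) (hz2s : ⟪z2, s⟫ = 0)
    (hz3x1 : ⟪z3, x1⟫ = 0) (hz3x2 : ⟪z3, x2⟫ = 0) (hz3s : ⟪z3, s⟫ = 0)
    (hz2z3 : ⟪z2, z3⟫ = 0) :
    gMI ![x1] ![x1 + z2, x1 + z3] ![s, x2] =
      (1/2) * Real.logb 2
        (1 + P1t * (1 - ρ12 ^ 2 / (1 - ρ2s ^ 2)) * (1 / N2 + 1 / N3)) := by
  obtain ⟨a, ha⟩ : ∃ a : ℝ, ρ12 * Real.sqrt (P1t * P2t) = a := ⟨_, rfl⟩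
  obtain ⟨b, hb⟩ : ∃ b : ℝ, ρ2s * Real.sqrt (P2t * Q) = b := ⟨_, rfl⟩
  rw [ha] at hx1x2
  rw [hb] at hx2s
  have ha2 : a ^ 2 = ρ12 ^ 2 * (P1t * P2t) := by
    rw [← ha, mul_pow, Real.sq_sqrt (by positivity)]
  have hb2 : b ^ 2 = ρ2s ^ 2 * (P2t * Q) := by
    rw [← hb, mul_pow, Real.sq_sqrt (by positivity)]
  -- symmetric inner products
  have hx2x1 : ⟪x2, x1⟫ = a := by rw [real_inner_comm]; exact hx1x2
  have hsx2 : ⟪s, x2⟫ = b := by rw [real_inner_comm]; exact hx2s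
  have hsx1 : ⟪s, x1⟫ = 0 := by rw [real_inner_comm]; exact hx1s
  have hx1z2 : ⟪x1, z2⟫ = 0 := by rw [real_inner_comm]; exact hz2x1
  have hx2z2 : ⟪x2, z2⟫ = 0 := by rw [real_inner_comm]; exact hz2x2
  have hsz2 : ⟪s, z2⟫ = 0 := by rw [real_inner_comm]; exact hz2s
  have hx1z3 : ⟪x1, z3⟫ = 0 := by rw [real_inner_comm]; exact hz3x1
  have hx2z3 : ⟪x2, z3⟫ = 0 := by rw [real_inner_comm]; exact hz3x2
  have hsz3 : ⟪s, z3⟫ = 0 := by rw [real_inner_comm]; exact hz3s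
  have hz3z2 : ⟪z3, z2⟫ = 0 := by rw [real_inner_comm]; exact hz2z3
  -- the appended families
  have e3 : Fin.append ![x1] ![s, x2] = ![x1, s, x2] := by
    funext i; fin_cases i <;> rfl
  have e4 : Fin.append ![x1 + z2, x1 + z3] ![s, x2] = ![x1 + z2, x1 + z3, s, x2] := by
    funext i; fin_cases i <;> rfl
  have e5 : Fin.append ![x1] (Fin.append ![x1 + z2, x1 + z3] ![s, x2])
      = ![x1, x1 + z2, x1 + z3, s, x2] := by
    funext i; fin_cases i <;> rfl
  -- the Gram matrices, explicitly
  have G2 : gramM ![s, x2] = !![Q, b; b, P2t] := by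
    ext i j
    fin_cases i <;> fin_cases j <;> simp [gramM, hs, hx2, hsx2, hx2s, -inner_self_eq_norm_sq_to_K]
  have G3 : gramM ![x1, s, x2] = !![P1t, 0, a; 0, Q, b; a, b, P2t] := by
    ext i j
    fin_cases i <;> fin_cases j <;>
      simp [gramM, hx1, hx2, hs, hx1x2, hx2s, hx1s, hx2x1, hsx2, hsx1, -inner_self_eq_norm_sq_to_K]
  have G4 : gramM ![x1 + z2, x1 + z3, s, x2] =
      !![P1t + N2, P1t, 0, a; P1t, P1t + N3, 0, a; (0:ℝ), 0, Q, b; a, a, b, P2t] := by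
    ext i j
    fin_cases i <;> fin_cases j <;>
      simp [gramM, inner_add_left, inner_add_right, hx1, hx2, hs, hz2, hz3, hx1x2, hx2s, hx1s,
        hz2x1, hz2x2, hz2s, hz3x1, hz3x2, hz3s, hz2z3, hx2x1, hsx2, hsx1, hx1z2, hx2z2, hsz2,
        hx1z3, hx2z3, hsz3, hz3z2, -inner_self_eq_norm_sq_to_K]
  have G5 : gramM ![x1, x1 + z2, x1 + z3, s, x2] =
      !![P1t, P1t, P1t, 0, a; P1t, P1t + N2, P1t, 0, a; P1t, P1t, P1t + N3, 0, a;
        (0:ℝ), 0, 0, Q, b; a, a, a, b, P2t] := by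
    ext i j
    fin_cases i <;> fin_cases j <;>
      simp [gramM, inner_add_left, inner_add_right, hx1, hx2, hs, hz2, hz3, hx1x2, hx2s, hx1s,
        hz2x1, hz2x2, hz2s, hz3x1, hz3x2, hz3s, hz2z3, hx2x1, hsx2, hsx1, hx1z2, hx2z2, hsz2,
        hx1z3, hx2z3, hsz3, hz3z2, -inner_self_eq_norm_sq_to_K]
  -- the determinants
  have d2 : (gramM ![s, x2]).det = Q * P2t - b ^ 2 := by
    rw [G2, Matrix.det_fin_two]; simp; ring
  have d3 : (gramM ![x1, s, x2]).det = P1t * (Q * P2t - b ^ 2) - a ^ 2 * Q := by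
    rw [G3, Matrix.det_fin_three]; simp; ring
  have d4 : (gramM ![x1 + z2, x1 + z3, s, x2]).det =
      P2t * Q * N2 * N3 + P1t * P2t * Q * N3 + P1t * P2t * Q * N2
        - N2 * N3 * b ^ 2 - Q * N3 * a ^ 2 - Q * N2 * a ^ 2
        - P1t * N3 * b ^ 2 - P1t * N2 * b ^ 2 := by
    rw [G4]
    simp [Matrix.det_succ_row_zero, Fin.sum_univ_succ, Fin.succAbove]
    ring
  have d5 : (gramM ![x1, x1 + z2, x1 + z3, s, x2]).det =
      N2 * N3 * (P1t * (Q * P2t - b ^ 2) - a ^ 2 * Q) := by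
    rw [G5]
    simp [Matrix.det_succ_row_zero, Fin.sum_univ_succ, Fin.succAbove]
    ring
  have hD2 : 0 < Q * P2t - b ^ 2 := by nlinarith [hb2, mul_pos hP2 hQ]
  have h2s : (0 : ℝ) < 1 - ρ2s ^ 2 := by nlinarith
  -- Gram positive semidefiniteness gives the 3×3 determinant is nonnegative
  have hD3 : 0 ≤ P1t * (Q * P2t - b ^ 2) - a ^ 2 * Q := by
    have wkey : (0:ℝ) ≤ ⟪x2 - (a / P1t) • x1 - (b / Q) • s,
        x2 - (a / P1t) • x1 - (b / Q) • s⟫ := real_inner_self_nonneg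
    have wexp : ⟪x2 - (a / P1t) • x1 - (b / Q) • s, x2 - (a / P1t) • x1 - (b / Q) • s⟫
        = P2t - a ^ 2 / P1t - b ^ 2 / Q := by
      simp only [inner_sub_left, inner_sub_right, real_inner_smul_left, real_inner_smul_right,
        hx1, hx2, hs, hx1x2, hx2s, hx1s, hx2x1, hsx2, hsx1]
      field_simp
      ring
    rw [wexp] at wkey
    have h2 : 0 ≤ (P2t - a ^ 2 / P1t - b ^ 2 / Q) * (P1t * Q) :=
      mul_nonneg wkey (by positivity)
    have h3 : (P2t - a ^ 2 / P1t - b ^ 2 / Q) * (P1t * Q)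
        = P1t * (Q * P2t - b ^ 2) - a ^ 2 * Q := by
      field_simp
      ring
    linarith [h3 ▸ h2]
  unfold gMI
  rw [e5, e4, e3, d2, d3, d4, d5]
  rcases eq_or_lt_of_le hD3 with h0 | hpos
  · -- degenerate case: both sides are zero
    have hnum : P1t * (Q * P2t - b ^ 2) - a ^ 2 * Q = 0 := h0.symm
    have hρ : ρ12 ^ 2 / (1 - ρ2s ^ 2) = 1 := by
      rw [div_eq_one_iff_eq (ne_of_gt h2s)]
      have hz : P1t * P2t * Q * (1 - ρ2s ^ 2 - ρ12 ^ 2) = 0 := by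
        rw [← hnum, ha2, hb2]; ring
      have hne : P1t * P2t * Q ≠ 0 := by positivity
      have := (mul_eq_zero.mp hz).resolve_left hne
      linarith
    rw [hnum, hρ]
    norm_num
  · have hratio : (P1t * (Q * P2t - b ^ 2) - a ^ 2 * Q) *
        (P2t * Q * N2 * N3 + P1t * P2t * Q * N3 + P1t * P2t * Q * N2
          - N2 * N3 * b ^ 2 - Q * N3 * a ^ 2 - Q * N2 * a ^ 2
          - P1t * N3 * b ^ 2 - P1t * N2 * b ^ 2) /
        (N2 * N3 * (P1t * (Q * P2t - b ^ 2) - a ^ 2 * Q) * (Q * P2t - b ^ 2))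
        = 1 + P1t * (1 - ρ12 ^ 2 / (1 - ρ2s ^ 2)) * (1 / N2 + 1 / N3) := by
      have hden : N2 * N3 * (P1t * (Q * P2t - b ^ 2) - a ^ 2 * Q) * (Q * P2t - b ^ 2) ≠ 0 := by
        positivity
      rw [div_eq_iff hden]
      have expand : ρ12 ^ 2 / (1 - ρ2s ^ 2) = a ^ 2 * Q / (Q * P2t - b ^ 2) / P1t := by
        rw [ha2]
        have hQb : Q * P2t - b ^ 2 = P2t * Q * (1 - ρ2s ^ 2) := by rw [hb2]; ring
        rw [hQb]
        field_simp
      rw [expand]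
      field_simp
      ring
    rw [hratio]
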